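/- Let (S_j)_{j=1}^n be i.i.d. finite random variables, and let Y^n be jointly distributed with X^n and S^n such that Y_j depends on (X_j, S_j) in a memoryless way (i.e., Y_j is conditionally independent of everything else given (X_j, S_j)). Then I(W1, S^n; Y^n | W2, X2^n, S2^n) − H(S^n|S2^n) ≤ Σ_{j=1}^n [ I(X_{1j}, S_{1j}; Y_j | X_{2j}, S_{2j}) − H(S_{1j} | S_{2j}) ], under the memoryless channel law and the Markov chain S_{1j} ↔ S_{2j} ↔ (S_1^{j−1}, S_2^{j−1}, S_{2,j+1}^n). -/

import Mathlib

open scoped BigOperators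

set_option synthInstance.maxSize 2048

namespace IE

variable {Ω : Type*} [Fintype Ω]

/-- Probability that the random variable `X` takes the value `x`, under pmf `p`. -/
noncomputable def pr {α : Type*} [DecidableEq α] (p : Ω → ℝ) (X : Ω → α) (x : α) : ℝ :=
  ∑ ω : Ω, if X ω = x then p ω else 0

/-- Shannon entropy (base 2) of a random variable. -/
noncomputable def ent {α : Type*} [Fintype α] [DecidableEq α] (p : Ω → ℝ) (X : Ω → α) : ℝ :=
  -∑ x : α, pr p X x * Real.logb 2 (pr p X x)

/-- Conditional entropy H(X | Z). -/
noncomputable def cent {α β : Type*} [Fintype α] [DecidableEq α] [Fintype β] [DecidableEq β]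
    (p : Ω → ℝ) (X : Ω → α) (Z : Ω → β) : ℝ :=
  ent p (fun ω => (X ω, Z ω)) - ent p Z

/-- Mutual information I(X ; Y). -/
noncomputable def mi {α β : Type*} [Fintype α] [DecidableEq α] [Fintype β] [DecidableEq β]
    (p : Ω → ℝ) (X : Ω → α) (Y : Ω → β) : ℝ :=
  ent p X + ent p Y - ent p (fun ω => (X ω, Y ω))

/-- Conditional mutual information I(X ; Y | Z). -/
noncomputable def cmi {α β γ : Type*} [Fintype α] [DecidableEq α] [Fintype β] [DecidableEq β]
    [Fintype γ] [DecidableEq γ] (p : Ω → ℝ) (X : Ω → α) (Y : Ω → β) (Z : Ω → γ) : ℝ :=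
  ent p (fun ω => (X ω, Z ω)) + ent p (fun ω => (Y ω, Z ω))
    - ent p (fun ω => (X ω, Y ω, Z ω)) - ent p Z

/-- `p` is a probability mass function on `Ω`. -/
def IsPMF (p : Ω → ℝ) : Prop := (∀ ω, 0 ≤ p ω) ∧ ∑ ω : Ω, p ω = 1


open Real

section Base

variable {α β γ : Type*} [DecidableEq α] [DecidableEq β] [DecidableEq γ]
variable {p : Ω → ℝ}

lemma pr_nonneg (hp : ∀ ω, 0 ≤ p ω) (X : Ω → α) (x : α) : 0 ≤ pr p X x := by
  apply Finset.sum_nonneg; intro ω _; split <;> simp [hp ω]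

lemma sum_pr [Fintype α] (X : Ω → α) : ∑ x, pr p X x = ∑ ω, p ω := by
  unfold pr
  rw [Finset.sum_comm]
  refine Finset.sum_congr rfl fun ω _ => ?_
  simp

lemma pr_comp [Fintype α] (X : Ω → α) (φ : α → β) (b : β) :
    pr p (fun ω => φ (X ω)) b = ∑ a, if φ a = b then pr p X a else 0 := by
  unfold pr
  have : ∀ a : α, (if φ a = b then ∑ ω : Ω, if X ω = a then p ω else 0 else 0)
      = ∑ ω : Ω, if X ω = a ∧ φ a = b then p ω else 0 := by
    intro a
    split
    · refine Finset.sum_congr rfl fun ω _ => ?_; simp [*]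
    · symm; refine Finset.sum_eq_zero fun ω _ => ?_; simp_all
  simp only [this]
  rw [Finset.sum_comm]
  refine Finset.sum_congr rfl fun ω _ => ?_
  rw [Finset.sum_eq_single (X ω)]
  · simp
  · intro a _ ha
    simp only [ite_eq_right_iff]
    intro h1
    exact (ha h1.1.symm).elim
  · simp

lemma pr_comp_inj [Fintype α] (X : Ω → α) {φ : α → β} (hφ : Function.Injective φ) (a : α) :
    pr p (fun ω => φ (X ω)) (φ a) = pr p X a := by
  rw [pr_comp, Finset.sum_eq_single a]
  · simp
  · intro a' _ ha'
    simp only [ite_eq_right_iff]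
    intro h
    exact (ha' (hφ h)).elim
  · simp

lemma pr_comp_of_not_mem [Fintype α] (X : Ω → α) (φ : α → β) {b : β}
    (hb : ∀ a, φ a ≠ b) : pr p (fun ω => φ (X ω)) b = 0 := by
  rw [pr_comp]
  exact Finset.sum_eq_zero fun a _ => by simp [hb a]

lemma log2_pos' : (0:ℝ) < Real.log 2 := Real.log_pos (by norm_num)

lemma log2_ne : (Real.log 2 : ℝ) ≠ 0 := ne_of_gt log2_pos'

lemma ent_eq [Fintype α] (X : Ω → α) :
    ent p X = (∑ x, Real.negMulLog (pr p X x)) / Real.log 2 := by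
  unfold ent
  rw [Finset.sum_div, ← Finset.sum_neg_distrib]
  refine Finset.sum_congr rfl fun x _ => ?_
  unfold Real.negMulLog Real.logb
  field_simp

lemma mul_ent_eq [Fintype α] (X : Ω → α) :
    Real.log 2 * ent p X = ∑ x, Real.negMulLog (pr p X x) := by
  rw [ent_eq, mul_div_cancel₀ _ log2_ne]

lemma ent_comp_inj [Fintype α] [Fintype β] (X : Ω → α) {φ : α → β}
    (hφ : Function.Injective φ) :
    ent p (fun ω => φ (X ω)) = ent p X := by
  rw [ent_eq, ent_eq]
  congr 1
  rw [← Finset.sum_subset (Finset.subset_univ (Finset.image φ Finset.univ))]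
  · rw [Finset.sum_image (fun a _ a' _ h => hφ h)]
    exact Finset.sum_congr rfl fun a _ => by rw [pr_comp_inj X hφ]
  · intro b _ hb
    rw [pr_comp_of_not_mem X φ, Real.negMulLog_zero]
    intro a hab
    exact hb (Finset.mem_image.mpr ⟨a, Finset.mem_univ a, hab⟩)

end Base

section Marg

variable {α β γ : Type*} [DecidableEq α] [DecidableEq β] [DecidableEq γ]
variable {p : Ω → ℝ}

/-- Marginalization over the second component. -/
lemma pr_fst [Fintype β] (A : Ω → α) (B : Ω → β) (a : α) :
    pr p A a = ∑ b, pr p (fun ω => (A ω, B ω)) (a, b) := by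
  unfold pr
  rw [Finset.sum_comm]
  refine Finset.sum_congr rfl fun ω _ => ?_
  rw [Finset.sum_eq_single (B ω)]
  · simp [Prod.ext_iff]
  · intro b _ hb
    simp only [ite_eq_right_iff, Prod.mk.injEq]
    intro h; exact (hb h.2.symm).elim
  · simp

/-- Marginalization over the first component. -/
lemma pr_snd [Fintype α] (A : Ω → α) (B : Ω → β) (b : β) :
    pr p B b = ∑ a, pr p (fun ω => (A ω, B ω)) (a, b) := by
  unfold pr
  rw [Finset.sum_comm]
  refine Finset.sum_congr rfl fun ω _ => ?_
  rw [Finset.sum_eq_single (A ω)]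
  · simp [Prod.ext_iff]
  · intro a _ ha
    simp only [ite_eq_right_iff, Prod.mk.injEq]
    intro h; exact (ha h.1.symm).elim
  · simp

/-- Marginalization over the middle component of a triple. -/
lemma pr_mid [Fintype β] (A : Ω → α) (B : Ω → β) (C : Ω → γ) (a : α) (c : γ) :
    pr p (fun ω => (A ω, C ω)) (a, c) = ∑ b, pr p (fun ω => (A ω, B ω, C ω)) (a, b, c) := by
  unfold pr
  rw [Finset.sum_comm]
  refine Finset.sum_congr rfl fun ω _ => ?_
  rw [Finset.sum_eq_single (B ω)]
  · simp [Prod.ext_iff, and_assoc]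
  · intro b _ hb
    simp only [ite_eq_right_iff, Prod.mk.injEq]
    intro h; exact (hb h.2.1.symm).elim
  · simp

end Marg

section Gibbs

open Real

/-- Gibbs' inequality. -/
lemma gibbs {ι : Type*} [Fintype ι] (a b : ι → ℝ) (ha : ∀ i, 0 ≤ a i) (hb : ∀ i, 0 ≤ b i)
    (hab : ∀ i, b i = 0 → a i = 0) (hsa : ∑ i, a i = 1) (hsb : ∑ i, b i ≤ 1) :
    ∑ i, negMulLog (a i) ≤ ∑ i, -(a i * Real.log (b i)) := by
  have key : ∑ i, (negMulLog (a i) + a i * Real.log (b i)) ≤ 0 := by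
    have step : ∀ i, negMulLog (a i) + a i * Real.log (b i) ≤ b i - a i := by
      intro i
      rcases eq_or_lt_of_le (ha i) with h0 | hpos
      · simp [← h0, hb i]
      · have hbpos : 0 < b i := by
          rcases eq_or_lt_of_le (hb i) with h0' | h' 
          · exact absurd (hab i h0'.symm) (by positivity)
          · exact h'
        have hlog : Real.log (b i / a i) ≤ b i / a i - 1 :=
          Real.log_le_sub_one_of_pos (div_pos hbpos hpos)
        have h2 := mul_le_mul_of_nonneg_left hlog (le_of_lt hpos)
        rw [Real.log_div (ne_of_gt hbpos) (ne_of_gt hpos)] at h2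
        have h3 : a i * (b i / a i - 1) = b i - a i := by
          field_simp
        rw [h3, mul_sub] at h2
        unfold negMulLog
        nlinarith
    calc ∑ i, (negMulLog (a i) + a i * Real.log (b i)) ≤ ∑ i, (b i - a i) :=
          Finset.sum_le_sum fun i _ => step i
      _ = (∑ i, b i) - ∑ i, a i := Finset.sum_sub_distrib _ _
      _ ≤ 0 := by rw [hsa]; linarith
  have expand : ∑ i, (negMulLog (a i) + a i * Real.log (b i))
      = ∑ i, negMulLog (a i) - ∑ i, -(a i * Real.log (b i)) := by
    rw [← Finset.sum_sub_distrib]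
    refine Finset.sum_congr rfl fun i _ => by ring
  linarith [expand ▸ key]

end Gibbs

section CMINonneg

open Real

variable {α β γ : Type*} [DecidableEq α] [DecidableEq β] [DecidableEq γ]
variable [Fintype α] [Fintype β] [Fintype γ]
variable {p : Ω → ℝ}

lemma sum_triple {M : Type*} [AddCommMonoid M] (f : α × β × γ → M) :
    ∑ t, f t = ∑ x, ∑ y, ∑ z, f (x, y, z) := by
  rw [Fintype.sum_prod_type]
  exact Finset.sum_congr rfl fun x _ => Fintype.sum_prod_type (f := fun s : β × γ => f (x, s))

lemma sum_triple' {M : Type*} [AddCommMonoid M] (f : α × β × γ → M) :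
    ∑ t, f t = ∑ z, ∑ x, ∑ y, f (x, y, z) := by
  rw [sum_triple f]
  rw [Finset.sum_congr rfl (fun x _ => Finset.sum_comm (f := fun y z => f (x, y, z)))]
  exact Finset.sum_comm

lemma cmi_nonneg (hp : IsPMF p) (X : Ω → α) (Y : Ω → β) (Z : Ω → γ) :
    0 ≤ cmi p X Y Z := by
  classical
  set a : α × β × γ → ℝ := pr p (fun ω => (X ω, Y ω, Z ω)) with ha_def
  set rXZ : α × γ → ℝ := pr p (fun ω => (X ω, Z ω)) with hrXZ_def
  set rYZ : β × γ → ℝ := pr p (fun ω => (Y ω, Z ω)) with hrYZ_def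
  set rZ : γ → ℝ := pr p Z with hrZ_def
  have ha0 : ∀ t, 0 ≤ a t := fun t => pr_nonneg hp.1 _ t
  have hXZ0 : ∀ s, 0 ≤ rXZ s := fun s => pr_nonneg hp.1 _ s
  have hYZ0 : ∀ s, 0 ≤ rYZ s := fun s => pr_nonneg hp.1 _ s
  have hZ0 : ∀ z, 0 ≤ rZ z := fun z => pr_nonneg hp.1 _ z
  -- marginal identities
  have hmXZ : ∀ x z, rXZ (x, z) = ∑ y, a (x, y, z) := fun x z => pr_mid X Y Z x z
  have hmYZ : ∀ y z, rYZ (y, z) = ∑ x, a (x, y, z) := fun y z => pr_snd X _ (y, z)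
  have hmZ : ∀ z, rZ z = ∑ y, rYZ (y, z) := fun z => pr_snd Y Z z
  have hmZ' : ∀ z, rZ z = ∑ x, rXZ (x, z) := fun z => pr_snd X Z z
  -- domination
  have hdomXZ : ∀ x y z, a (x, y, z) ≤ rXZ (x, z) := by
    intro x y z; rw [hmXZ]
    exact Finset.single_le_sum (fun y' _ => ha0 (x, y', z)) (Finset.mem_univ y)
  have hdomYZ : ∀ x y z, a (x, y, z) ≤ rYZ (y, z) := by
    intro x y z; rw [hmYZ]
    exact Finset.single_le_sum (fun x' _ => ha0 (x', y, z)) (Finset.mem_univ x)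
  have hdomZX : ∀ x z, rXZ (x, z) ≤ rZ z := by
    intro x z; rw [hmZ']
    exact Finset.single_le_sum (fun x' _ => hXZ0 (x', z)) (Finset.mem_univ x)
  set b : α × β × γ → ℝ := fun t => rXZ (t.1, t.2.2) * rYZ t.2 / rZ t.2.2 with hb_def
  have hb0 : ∀ t, 0 ≤ b t := fun t =>
    div_nonneg (mul_nonneg (hXZ0 _) (hYZ0 _)) (hZ0 _)
  have hab : ∀ t, b t = 0 → a t = 0 := by
    rintro ⟨x, y, z⟩ hbt
    rcases div_eq_zero_iff.mp hbt with h | h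
    · rcases mul_eq_zero.mp h with h' | h'
      · exact le_antisymm (h' ▸ hdomXZ x y z) (ha0 _)
      · exact le_antisymm (h' ▸ hdomYZ x y z) (ha0 _)
    · have : rXZ (x, z) = 0 := le_antisymm (h ▸ hdomZX x z) (hXZ0 _)
      exact le_antisymm (this ▸ hdomXZ x y z) (ha0 _)
  have hsa : ∑ t, a t = 1 := by rw [ha_def, sum_pr, hp.2]
  have hsb : ∑ t, b t ≤ 1 := by
    have hz : ∀ z, (∑ x, ∑ y, b (x, y, z)) ≤ rZ z := by
      intro z
      have h1 : (∑ x, rXZ (x, z)) * (∑ y, rYZ (y, z)) / rZ z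
          = ∑ x, ∑ y, b (x, y, z) := by
        rw [Finset.sum_mul, Finset.sum_div]
        refine Finset.sum_congr rfl fun x _ => ?_
        rw [Finset.mul_sum, Finset.sum_div]
      rw [← h1, ← hmZ', ← hmZ]
      rcases eq_or_lt_of_le (hZ0 z) with h0 | hpos
      · rw [← h0]; simp
      · rw [mul_div_assoc, div_self (ne_of_gt hpos), mul_one]
    calc ∑ t, b t = ∑ z, ∑ x, ∑ y, b (x, y, z) := sum_triple' b
      _ ≤ ∑ z, rZ z := Finset.sum_le_sum fun z _ => hz z
      _ = 1 := by rw [hrZ_def, sum_pr, hp.2]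
  have hgibbs := gibbs a b ha0 hb0 hab hsa hsb
  -- rewrite the Gibbs RHS into three entropy sums
  have hsplit : ∑ t, -(a t * Real.log (b t))
      = (∑ s : α × γ, negMulLog (rXZ s)) + (∑ s : β × γ, negMulLog (rYZ s))
        - ∑ z, negMulLog (rZ z) := by
    have hterm : ∀ t : α × β × γ, -(a t * Real.log (b t))
        = -(a t * Real.log (rXZ (t.1, t.2.2))) + -(a t * Real.log (rYZ t.2))
          + a t * Real.log (rZ t.2.2) := by
      rintro ⟨x, y, z⟩
      rcases eq_or_lt_of_le (ha0 (x, y, z)) with h0 | hpos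
      · rw [← h0]; ring
      · have h1 : 0 < rXZ (x, z) := lt_of_lt_of_le hpos (hdomXZ x y z)
        have h2 : 0 < rYZ (y, z) := lt_of_lt_of_le hpos (hdomYZ x y z)
        have h3 : 0 < rZ z := lt_of_lt_of_le h1 (hdomZX x z)
        show -(a (x,y,z) * Real.log (rXZ (x, z) * rYZ (y, z) / rZ z)) = _
        rw [Real.log_div (by positivity) (ne_of_gt h3),
          Real.log_mul (ne_of_gt h1) (ne_of_gt h2)]
        ring
    rw [Finset.sum_congr rfl fun t _ => hterm t]
    rw [Finset.sum_add_distrib, Finset.sum_add_distrib]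
    have e1 : ∑ t : α × β × γ, -(a t * Real.log (rXZ (t.1, t.2.2)))
        = ∑ s : α × γ, negMulLog (rXZ s) := by
      have l : ∀ x z, ∑ y, -(a (x, y, z) * Real.log (rXZ (x, z))) = negMulLog (rXZ (x, z)) := by
        intro x z
        rw [Finset.sum_neg_distrib, ← Finset.sum_mul, ← hmXZ x z]
        unfold negMulLog; ring
      rw [sum_triple (f := fun t => -(a t * Real.log (rXZ (t.1, t.2.2)))),
        Fintype.sum_prod_type (f := fun s : α × γ => negMulLog (rXZ s))]
      refine Finset.sum_congr rfl fun x _ => ?_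
      rw [Finset.sum_comm]
      exact Finset.sum_congr rfl fun z _ => l x z
    have e2 : ∑ t : α × β × γ, -(a t * Real.log (rYZ t.2))
        = ∑ s : β × γ, negMulLog (rYZ s) := by
      have l : ∀ s : β × γ, ∑ x, -(a (x, s) * Real.log (rYZ s)) = negMulLog (rYZ s) := by
        rintro ⟨y, z⟩
        rw [Finset.sum_neg_distrib, ← Finset.sum_mul, ← hmYZ y z]
        unfold negMulLog; ring
      rw [Fintype.sum_prod_type (f := fun t : α × β × γ => -(a t * Real.log (rYZ t.2))),
        Finset.sum_comm]
      exact Finset.sum_congr rfl fun s _ => l s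
    have e3 : ∑ t : α × β × γ, a t * Real.log (rZ t.2.2)
        = -∑ z, negMulLog (rZ z) := by
      have l : ∀ z, ∑ x, ∑ y, a (x, y, z) * Real.log (rZ z) = -negMulLog (rZ z) := by
        intro z
        have hzz : rZ z = ∑ x, ∑ y, a (x, y, z) := by
          rw [hmZ z, Finset.sum_congr rfl fun y _ => hmYZ y z]
          exact Finset.sum_comm
        simp only [← Finset.sum_mul]
        rw [← hzz]; unfold negMulLog; ring
      rw [sum_triple' (f := fun t => a t * Real.log (rZ t.2.2)), ← Finset.sum_neg_distrib]
      exact Finset.sum_congr rfl fun z _ => l z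
    rw [e1, e2, e3]
    ring
  -- assemble
  have hfin : 0 ≤ Real.log 2 * cmi p X Y Z := by
    unfold cmi
    rw [mul_sub, mul_sub, mul_add, mul_ent_eq, mul_ent_eq, mul_ent_eq, mul_ent_eq]
    rw [hsplit] at hgibbs
    rw [← ha_def, ← hrXZ_def, ← hrYZ_def, ← hrZ_def]
    linarith
  exact nonneg_of_mul_nonneg_right hfin log2_pos'

end CMINonneg

set_option linter.unusedSectionVars false

section Cond

open Real

variable {α β γ δ : Type*}
variable [Fintype α] [DecidableEq α] [Fintype β] [DecidableEq β]
variable [Fintype γ] [DecidableEq γ] [Fintype δ] [DecidableEq δ]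
variable {p : Ω → ℝ}

lemma ent_congr {X Y : Ω → α} (h : ∀ ω, X ω = Y ω) : ent p X = ent p Y := by
  rw [funext h]

lemma ent_graph (B : Ω → β) (g : β → γ) :
    ent p (fun ω => (B ω, g (B ω))) = ent p B := by
  have h := ent_comp_inj (p := p) (φ := fun b : β => (b, g b)) B
    (fun b b' h => (Prod.ext_iff.mp h).1)
  simpa using h

lemma ent_pair_graph (X : Ω → α) (B : Ω → β) (g : β → γ) :
    ent p (fun ω => (X ω, B ω, g (B ω))) = ent p (fun ω => (X ω, B ω)) := by
  have h := ent_comp_inj (p := p) (φ := fun s : α × β => (s.1, s.2, g s.2))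
    (fun ω => (X ω, B ω)) (fun s t h => by
      obtain ⟨h1, h2⟩ := Prod.ext_iff.mp h
      obtain ⟨h3, -⟩ := Prod.ext_iff.mp h2
      exact Prod.ext h1 h3)
  simpa using h

lemma ent_swap (A : Ω → α) (B : Ω → β) :
    ent p (fun ω => (A ω, B ω)) = ent p (fun ω => (B ω, A ω)) := by
  have h := ent_comp_inj (p := p) (φ := Prod.swap (α := β) (β := α))
    (fun ω => (B ω, A ω)) Prod.swap_injective
  simpa using h

lemma ent_assoc (A : Ω → α) (B : Ω → β) (C : Ω → γ) :
    ent p (fun ω => ((A ω, B ω), C ω)) = ent p (fun ω => (A ω, B ω, C ω)) := by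
  have h := ent_comp_inj (p := p) (φ := fun t : α × β × γ => ((t.1, t.2.1), t.2.2))
    (fun ω => (A ω, B ω, C ω)) (fun s t h => by
      obtain ⟨h1, h2⟩ := Prod.ext_iff.mp h
      obtain ⟨h3, h4⟩ := Prod.ext_iff.mp h1
      exact Prod.ext h3 (Prod.ext h4 h2))
  simpa using h

lemma cent_comp_left (X : Ω → α) {φ : α → δ} (hφ : Function.Injective φ) (Z : Ω → γ) :
    cent p (fun ω => φ (X ω)) Z = cent p X Z := by
  unfold cent
  congr 1
  have h := ent_comp_inj (p := p) (φ := fun s : α × γ => (φ s.1, s.2))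
    (fun ω => (X ω, Z ω)) (fun s t h => by
      obtain ⟨h1, h2⟩ := Prod.ext_iff.mp h
      exact Prod.ext (hφ h1) h2)
  simpa using h

/-- Conditioning on more information reduces conditional entropy. -/
lemma cent_le_cent_comp (hp : IsPMF p) (X : Ω → α) (B : Ω → β) (g : β → γ) :
    cent p X B ≤ cent p X (fun ω => g (B ω)) := by
  have h := cmi_nonneg hp X B (fun ω => g (B ω))
  unfold cmi at h
  rw [ent_graph B g, ent_pair_graph X B g] at h
  unfold cent
  linarith

/-- Subadditivity step: H(A,B | C) ≤ H(A|C) + H(B|C). -/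
lemma cent_pair_le (hp : IsPMF p) (A : Ω → α) (B : Ω → β) (C : Ω → γ) :
    cent p (fun ω => (A ω, B ω)) C ≤ cent p A C + cent p B C := by
  have h := cmi_nonneg hp A B C
  unfold cmi at h
  unfold cent
  rw [ent_assoc A B C]
  linarith

end Cond

section Tuple

open Real

variable {β γ : Type*} [Fintype β] [DecidableEq β] [Fintype γ] [DecidableEq γ]
variable {p : Ω → ℝ}

lemma cent_congr_left {α : Type*} [Fintype α] [DecidableEq α] {X X' : Ω → α} (Z : Ω → γ)
    (h : ∀ ω, X ω = X' ω) : cent p X Z = cent p X' Z := by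
  rw [funext h]

lemma cent_tuple_le_sum (hp : IsPMF p) :
    ∀ (n : ℕ) (Y : Fin n → Ω → β) (C : Ω → γ),
      cent p (fun ω => fun j => Y j ω) C ≤ ∑ j, cent p (Y j) C := by
  intro n
  induction n with
  | zero =>
    intro Y C
    have h0 : cent p (fun ω => fun j : Fin 0 => Y j ω) C = 0 := by
      unfold cent
      have h1 : ent p (fun ω => ((fun j : Fin 0 => Y j ω), C ω)) = ent p C := by
        have h2 := ent_comp_inj (p := p)
          (φ := fun c : γ => (((fun j => j.elim0) : Fin 0 → β), c)) C
          (fun c c' h => (Prod.ext_iff.mp h).2)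
        rw [← h2]
        exact ent_congr fun ω => by
          refine Prod.ext ?_ rfl
          exact funext fun j => (j : Fin 0).elim0
      rw [h1]; ring
    rw [h0]
    simp
  | succ n ih =>
    intro Y C
    have hinj : Function.Injective (fun s : (Fin n → β) × β => (Fin.snoc s.1 s.2 : Fin (n+1) → β)) := by
      intro s t h
      simp only at h
      refine Prod.ext ?_ ?_
      · have := congrArg Fin.init h
        rwa [Fin.init_snoc, Fin.init_snoc] at this
      · have := congrArg (fun f : Fin (n+1) → β => f (Fin.last n)) h
        simpa [Fin.snoc_last] using this
    have key : cent p (fun ω => fun j => Y j ω) C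
        = cent p (fun ω => ((fun j : Fin n => Y j.castSucc ω), Y (Fin.last n) ω)) C := by
      rw [← cent_comp_left (p := p)
        (X := fun ω => ((fun j : Fin n => Y j.castSucc ω), Y (Fin.last n) ω)) hinj C]
      refine cent_congr_left C fun ω => ?_
      refine funext fun j => ?_
      refine Fin.lastCases ?_ ?_ j
      · simp [Fin.snoc_last]
      · intro i; simp [Fin.snoc_castSucc]
    rw [key, Fin.sum_univ_castSucc]
    calc cent p (fun ω => ((fun j : Fin n => Y j.castSucc ω), Y (Fin.last n) ω)) C
        ≤ cent p (fun ω => fun j : Fin n => Y j.castSucc ω) C + cent p (Y (Fin.last n)) C :=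
          cent_pair_le hp _ _ C
      _ ≤ (∑ j : Fin n, cent p (Y j.castSucc) C) + cent p (Y (Fin.last n)) C := by
          have := ih (fun j => Y j.castSucc) C
          linarith

/-- Entropy of a product distribution is the sum of entropies. -/
lemma sum_negMulLog_prod :
    ∀ (n : ℕ) (g : Fin n → β → ℝ), (∀ j, ∑ y, g j y = 1) →
      ∑ y : Fin n → β, negMulLog (∏ j, g j (y j)) = ∑ j, ∑ z, negMulLog (g j z) := by
  intro n
  induction n with
  | zero => intro g hg; simp
  | succ n ih =>
    intro g hg
    rw [← Equiv.sum_comp (Fin.consEquiv (fun _ : Fin (n+1) => β))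
      (fun y : Fin (n+1) → β => negMulLog (∏ j, g j (y j)))]
    have hcons : ∀ s : β × (Fin n → β),
        negMulLog (∏ j, g j ((Fin.consEquiv (fun _ : Fin (n+1) => β)) s j))
        = (∏ j : Fin n, g j.succ (s.2 j)) * negMulLog (g 0 s.1)
          + g 0 s.1 * negMulLog (∏ j : Fin n, g j.succ (s.2 j)) := by
      rintro ⟨a, f⟩
      have : (∏ j, g j ((Fin.consEquiv (fun _ : Fin (n+1) => β)) (a, f) j))
          = g 0 a * ∏ j : Fin n, g j.succ (f j) := by
        rw [Fin.prod_univ_succ]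
        simp [Fin.consEquiv]
      rw [this, negMulLog_mul]
    rw [Finset.sum_congr rfl fun s _ => hcons s, Fintype.sum_prod_type,
      Fin.sum_univ_succ]
    have hsumf : ∑ f : Fin n → β, ∏ j : Fin n, g j.succ (f j) = 1 := by
      rw [← Fintype.prod_sum (f := fun (j : Fin n) (z : β) => g j.succ z)]
      exact Finset.prod_eq_one fun j _ => hg j.succ
    have hrow : ∀ a : β, ∑ f : Fin n → β,
        ((∏ j : Fin n, g j.succ (f j)) * negMulLog (g 0 a)
          + g 0 a * negMulLog (∏ j : Fin n, g j.succ (f j)))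
        = negMulLog (g 0 a) + g 0 a * ∑ j : Fin n, ∑ z, negMulLog (g j.succ z) := by
      intro a
      rw [Finset.sum_add_distrib, ← Finset.sum_mul, hsumf, one_mul, ← Finset.mul_sum,
        ih (fun j => g j.succ) (fun j => hg j.succ)]
    rw [Finset.sum_congr rfl fun a _ => hrow a, Finset.sum_add_distrib, ← Finset.sum_mul,
      hg 0, one_mul]

end Tuple

section Kernel

open Real

variable {β γ ε : Type*} [Fintype β] [DecidableEq β] [Fintype γ] [DecidableEq γ]
variable [Fintype ε] [DecidableEq ε]
variable {p : Ω → ℝ}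

lemma pr_pair_eq_zero (hp : IsPMF p) (A : Ω → ε) (B : Ω → β) {a : ε} (ha : pr p A a = 0)
    (b : β) : pr p (fun ω => (A ω, B ω)) (a, b) = 0 := by
  have h1 := pr_fst (p := p) A B a
  rw [ha] at h1
  have := (Finset.sum_eq_zero_iff_of_nonneg
    (fun b _ => pr_nonneg hp.1 (fun ω => (A ω, B ω)) (a, b))).mp h1.symm
  exact this b (Finset.mem_univ b)

/-- If the conditional distribution of `Y` given `E` is the kernel `M`, then
`log 2 * H(Y|E)` is the average of the entropies of the kernel rows. -/
lemma cent_eq_avg (hp : IsPMF p) (E : Ω → ε) (Y : Ω → β) (M : ε → β → ℝ)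
    (h : ∀ e y, pr p (fun ω => (E ω, Y ω)) (e, y) = pr p E e * M e y) :
    Real.log 2 * cent p Y E = ∑ e, pr p E e * ∑ y, negMulLog (M e y) := by
  have hnorm : ∀ e, pr p E e ≠ 0 → ∑ y, M e y = 1 := by
    intro e he
    have h1 : pr p E e = ∑ y, pr p (fun ω => (E ω, Y ω)) (e, y) := pr_fst E Y e
    rw [Finset.sum_congr rfl (fun y _ => h e y), ← Finset.mul_sum] at h1
    nth_rewrite 1 [← mul_one (pr p E e)] at h1
    exact (mul_left_cancel₀ he h1).symm
  have hrow : ∀ e, ∑ y, negMulLog (pr p (fun ω => (E ω, Y ω)) (e, y))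
      = negMulLog (pr p E e) + pr p E e * ∑ y, negMulLog (M e y) := by
    intro e
    rcases eq_or_ne (pr p E e) 0 with h0 | h0
    · rw [h0]
      simp only [negMulLog_zero, zero_mul, zero_add, add_zero]
      refine Finset.sum_eq_zero fun y _ => ?_
      rw [h e y, h0, zero_mul, negMulLog_zero]
    · rw [Finset.sum_congr rfl fun y _ => by rw [h e y, negMulLog_mul],
        Finset.sum_add_distrib, ← Finset.sum_mul, hnorm e h0, one_mul, ← Finset.mul_sum]
  unfold cent
  rw [mul_sub, ent_swap Y E, mul_ent_eq, mul_ent_eq, Fintype.sum_prod_type]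
  rw [Finset.sum_congr rfl fun e _ => hrow e, Finset.sum_add_distrib]
  ring

/-- Marginalizing one coordinate of a tuple jointly with `E`. -/
lemma pr_tuple_marg {n : ℕ} (E : Ω → ε) (Y : Fin n → Ω → β) (j : Fin n) (e : ε) (y : β) :
    pr p (fun ω => (E ω, Y j ω)) (e, y)
      = ∑ f : Fin n → β, if f j = y then pr p (fun ω => (E ω, fun i => Y i ω)) (e, f) else 0 := by
  unfold pr
  have hsimp : ∀ f : Fin n → β, (if f j = y then ∑ ω : Ω, if (E ω, fun i => Y i ω) = (e, f) then p ω else 0 else 0)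
      = ∑ ω : Ω, if (E ω, fun i => Y i ω) = (e, f) ∧ f j = y then p ω else 0 := by
    intro f
    split
    · refine Finset.sum_congr rfl fun ω _ => ?_; simp [*]
    · symm; refine Finset.sum_eq_zero fun ω _ => ?_; simp_all
  simp only [hsimp]
  rw [Finset.sum_comm]
  refine Finset.sum_congr rfl fun ω _ => ?_
  rw [Finset.sum_eq_single (fun i => Y i ω)]
  · by_cases hy : Y j ω = y
    · simp [hy, Prod.ext_iff]
    · simp [hy, Prod.ext_iff]
  · intro f _ hf
    simp only [ite_eq_right_iff, Prod.mk.injEq]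
    rintro ⟨⟨-, h2⟩, -⟩
    exact (hf h2.symm).elim
  · simp

/-- Key combinatorial identity: summing a product over tuples with one fixed coordinate. -/
lemma sum_fix_coord {n : ℕ} (g : Fin n → β → ℝ) (j : Fin n) (y : β) :
    ∑ f : Fin n → β, (if f j = y then ∏ i, g i (f i) else 0)
      = g j y * ∏ i ∈ Finset.univ.erase j, ∑ z, g i z := by
  have hterm : ∀ f : Fin n → β, (if f j = y then ∏ i, g i (f i) else 0)
      = ∏ i, (fun i z => if i = j then (if z = y then g i z else 0) else g i z) i (f i) := by
    intro f
    by_cases hfj : f j = y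
    · rw [if_pos hfj]
      refine Finset.prod_congr rfl fun i _ => ?_
      by_cases hij : i = j
      · subst hij; simp [hfj]
      · simp [hij]
    · rw [if_neg hfj]
      symm
      refine Finset.prod_eq_zero (Finset.mem_univ j) ?_
      simp [hfj]
  rw [Finset.sum_congr rfl fun f _ => hterm f,
    ← Fintype.prod_sum (f := fun (i : Fin n) (z : β) => if i = j then (if z = y then g i z else 0) else g i z)]
  rw [← Finset.mul_prod_erase Finset.univ _ (Finset.mem_univ j)]
  congr 1
  · simp
  · refine Finset.prod_congr rfl fun i hi => ?_
    refine Finset.sum_congr rfl fun z _ => ?_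
    rw [if_neg (Finset.ne_of_mem_erase hi)]

end Kernel

section TupleProd

open Real

variable {β ε : Type*} [Fintype β] [DecidableEq β] [Fintype ε] [DecidableEq ε]
variable {p : Ω → ℝ}

lemma cent_tuple_prod (hp : IsPMF p) {n : ℕ} (E : Ω → ε) (Y : Fin n → Ω → β)
    (ch : Fin n → ε → β → ℝ)
    (h : ∀ e f, pr p (fun ω => (E ω, fun j => Y j ω)) (e, f) = pr p E e * ∏ j, ch j e (f j)) :
    cent p (fun ω => fun j => Y j ω) E = ∑ j, cent p (Y j) E := by
  classical
  have hK := cent_eq_avg hp E (fun ω => fun j => Y j ω)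
    (fun e f => ∏ j, ch j e (f j)) h
  set Mj : Fin n → ε → β → ℝ :=
    fun j e y => pr p (fun ω => (E ω, Y j ω)) (e, y) / pr p E e with hMj_def
  have hMj : ∀ j e y, pr p (fun ω => (E ω, Y j ω)) (e, y) = pr p E e * Mj j e y := by
    intro j e y
    rcases eq_or_ne (pr p E e) 0 with h0 | h0
    · rw [h0, zero_mul, pr_pair_eq_zero hp E (Y j) h0 y]
    · rw [hMj_def, mul_div_cancel₀ _ h0]
  have hKj : ∀ j, Real.log 2 * cent p (Y j) E
      = ∑ e, pr p E e * ∑ y, negMulLog (Mj j e y) :=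
    fun j => cent_eq_avg hp E (Y j) (Mj j) (hMj j)
  -- pointwise analysis for e with positive probability
  have hmain : ∀ e, pr p E e ≠ 0 →
      ∑ f : Fin n → β, negMulLog (∏ j, ch j e (f j))
        = ∑ j, ∑ y, negMulLog (Mj j e y) := by
    intro e he
    set c : Fin n → ℝ := fun i => ∑ z, ch i e z with hc_def
    have hprod1 : ∏ i, c i = 1 := by
      have h1 : pr p E e = ∑ f, pr p (fun ω => (E ω, fun j => Y j ω)) (e, f) :=
        pr_fst E _ e
      rw [Finset.sum_congr rfl (fun f _ => h e f), ← Finset.mul_sum,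
        ← Fintype.prod_sum (f := fun (i : Fin n) (z : β) => ch i e z)] at h1
      nth_rewrite 1 [← mul_one (pr p E e)] at h1
      exact (mul_left_cancel₀ he h1).symm
    have hMj_eq : ∀ j y, Mj j e y = ch j e y * ∏ i ∈ Finset.univ.erase j, c i := by
      intro j y
      have h1 : pr p E e * Mj j e y
          = pr p E e * (ch j e y * ∏ i ∈ Finset.univ.erase j, c i) := by
        rw [← hMj j e y, pr_tuple_marg E Y j e y]
        have hterm : ∀ f : Fin n → β,
            (if f j = y then pr p (fun ω => (E ω, fun i => Y i ω)) (e, f) else 0)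
            = pr p E e * (if f j = y then ∏ i, ch i e (f i) else 0) := by
          intro f
          rw [h e f]
          split <;> simp
        rw [Finset.sum_congr rfl fun f _ => hterm f, ← Finset.mul_sum,
          sum_fix_coord (fun i z => ch i e z) j y]
      exact mul_left_cancel₀ he h1
    have hnormj : ∀ j, ∑ y, Mj j e y = 1 := by
      intro j
      have h1 : pr p E e = ∑ y, pr p (fun ω => (E ω, Y j ω)) (e, y) := pr_fst E (Y j) e
      rw [Finset.sum_congr rfl (fun y _ => hMj j e y), ← Finset.mul_sum] at h1
      nth_rewrite 1 [← mul_one (pr p E e)] at h1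
      exact (mul_left_cancel₀ he h1).symm
    have hCprod : ∏ j, ∏ i ∈ Finset.univ.erase j, c i = 1 := by
      have h1 : ∏ j, (c j * ∏ i ∈ Finset.univ.erase j, c i) = 1 := by
        rw [Finset.prod_congr rfl fun j _ =>
          Finset.mul_prod_erase Finset.univ c (Finset.mem_univ j)]
        rw [Finset.prod_congr rfl fun j _ => hprod1]
        exact Finset.prod_const_one
      rw [Finset.prod_mul_distrib, hprod1, one_mul] at h1
      exact h1
    have hprodm : ∀ f : Fin n → β, ∏ j, Mj j e (f j) = ∏ j, ch j e (f j) := by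
      intro f
      rw [Finset.prod_congr rfl fun j _ => hMj_eq j (f j), Finset.prod_mul_distrib,
        hCprod, mul_one]
    rw [Finset.sum_congr rfl fun f _ => by rw [← hprodm f]]
    exact sum_negMulLog_prod n (fun j y => Mj j e y) hnormj
  -- combine
  have hfin : Real.log 2 * cent p (fun ω => fun j => Y j ω) E
      = Real.log 2 * ∑ j, cent p (Y j) E := by
    rw [hK, Finset.mul_sum, Finset.sum_congr rfl fun j _ => hKj j, Finset.sum_comm]
    refine Finset.sum_congr rfl fun e _ => ?_
    rcases eq_or_ne (pr p E e) 0 with h0 | h0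
    · simp [h0]
    · rw [hmain e h0, Finset.mul_sum]
  exact mul_left_cancel₀ log2_ne hfin

end TupleProd

section KernelProj

open Real

variable {β γ ε : Type*} [Fintype β] [DecidableEq β] [Fintype γ] [DecidableEq γ]
variable [Fintype ε] [DecidableEq ε]
variable {p : Ω → ℝ}

/-- If the conditional law of `Y` given `E` depends on `E` only through `g (E)`,
then `H(Y|E) = H(Y|g(E))`. -/
lemma cent_kernel (hp : IsPMF p) (E : Ω → ε) (Y : Ω → β) (g : ε → γ) (M : γ → β → ℝ)
    (h : ∀ e y, pr p (fun ω => (E ω, Y ω)) (e, y) = pr p E e * M (g e) y) :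
    cent p Y E = cent p Y (fun ω => g (E ω)) := by
  have h1 := cent_eq_avg hp E Y (fun e => M (g e)) h
  have hpr_g : ∀ a, pr p (fun ω => g (E ω)) a = ∑ e, if g e = a then pr p E e else 0 :=
    fun a => pr_comp E g a
  have h2 : ∀ a y, pr p (fun ω => (g (E ω), Y ω)) (a, y)
      = pr p (fun ω => g (E ω)) a * M a y := by
    intro a y
    have step : pr p (fun ω => (g (E ω), Y ω)) (a, y)
        = ∑ e, if g e = a then pr p (fun ω => (E ω, Y ω)) (e, y) else 0 := by
      have hc := pr_comp (p := p) (fun ω => (E ω, Y ω))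
        (fun s : ε × β => (g s.1, s.2)) (a, y)
      rw [show (fun ω => ((fun s : ε × β => (g s.1, s.2)) ((fun ω => (E ω, Y ω)) ω)))
          = (fun ω => (g (E ω), Y ω)) from rfl] at hc
      rw [hc, Fintype.sum_prod_type]
      refine Finset.sum_congr rfl fun e _ => ?_
      rw [Finset.sum_eq_single y]
      · simp [Prod.ext_iff]
      · intro y' _ hy'
        simp only [ite_eq_right_iff, Prod.mk.injEq]
        rintro ⟨-, h2⟩
        exact (hy' h2).elim
      · simp
    rw [step, hpr_g, Finset.sum_mul]
    refine Finset.sum_congr rfl fun e _ => ?_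
    by_cases hge : g e = a
    · rw [if_pos hge, if_pos hge, h e y, hge]
    · simp [hge]
  have h3 := cent_eq_avg hp (fun ω => g (E ω)) Y M h2
  have key : ∑ a, pr p (fun ω => g (E ω)) a * ∑ y, negMulLog (M a y)
      = ∑ e, pr p E e * ∑ y, negMulLog (M (g e) y) := by
    have hs : ∀ a : γ, pr p (fun ω => g (E ω)) a * ∑ y, negMulLog (M a y)
        = ∑ e, (if g e = a then pr p E e * ∑ y, negMulLog (M a y) else 0) := by
      intro a
      rw [hpr_g a, Finset.sum_mul]
      refine Finset.sum_congr rfl fun e _ => ?_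
      split <;> simp
    rw [Finset.sum_congr rfl fun a _ => hs a, Finset.sum_comm]
    refine Finset.sum_congr rfl fun e _ => ?_
    rw [Finset.sum_eq_single (g e)]
    · simp
    · intro a _ ha
      rw [if_neg (fun hh => ha hh.symm)]
    · simp
  have hfin : Real.log 2 * cent p Y E = Real.log 2 * cent p Y (fun ω => g (E ω)) := by
    rw [h1, h3, key]
  exact mul_left_cancel₀ log2_ne hfin

end KernelProj

section Aux

open Real

variable {α β γ ε : Type*} [Fintype α] [DecidableEq α] [Fintype β] [DecidableEq β]
variable [Fintype γ] [DecidableEq γ] [Fintype ε] [DecidableEq ε]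
variable {p : Ω → ℝ}

lemma cmi_eq_cent_sub (A : Ω → α) (B : Ω → β) (C : Ω → γ) :
    cmi p A B C = cent p B C - cent p B (fun ω => (A ω, C ω)) := by
  unfold cmi cent
  have h : ent p (fun ω => (B ω, A ω, C ω)) = ent p (fun ω => (A ω, B ω, C ω)) := by
    have h2 := ent_comp_inj (p := p) (φ := fun t : α × β × γ => (t.2.1, t.1, t.2.2))
      (fun ω => (A ω, B ω, C ω)) (fun s t h => by
        obtain ⟨h1, h2, h3⟩ : s.2.1 = t.2.1 ∧ s.1 = t.1 ∧ s.2.2 = t.2.2 := by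
          simpa [Prod.ext_iff] using h
        exact Prod.ext h2 (Prod.ext h1 h3))
    simpa using h2
  rw [h]
  ring

lemma cent_comp_right_inj (X : Ω → α) (Z : Ω → γ) {φ : γ → ε}
    (hφ : Function.Injective φ) :
    cent p X (fun ω => φ (Z ω)) = cent p X Z := by
  unfold cent
  rw [ent_comp_inj Z hφ]
  congr 1
  have h := ent_comp_inj (p := p) (φ := fun s : α × γ => (s.1, φ s.2))
    (fun ω => (X ω, Z ω)) (fun s t h => by
      obtain ⟨h1, h2⟩ := Prod.ext_iff.mp h
      exact Prod.ext h1 (hφ h2))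
  simpa using h

lemma cent_unit (hp : IsPMF p) (X : Ω → α) :
    cent p X (fun _ => ()) = ent p X := by
  unfold cent
  have h1 : ent p (fun ω => (X ω, ())) = ent p X := ent_graph X (fun _ => ())
  have h2 : ent p (fun _ : Ω => ()) = 0 := by
    have hpr : pr p (fun _ : Ω => ()) () = 1 := by
      unfold pr; simpa using hp.2
    unfold ent
    rw [Fintype.sum_unique]
    rw [show (default : Unit) = () from rfl, hpr]
    simp
  rw [h1, h2]
  ring

lemma ent_tuple_prod (hp : IsPMF p) {n : ℕ} (Y : Fin n → Ω → β) (q : Fin n → β → ℝ)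
    (h : ∀ f, pr p (fun ω => fun j => Y j ω) f = ∏ j, q j (f j)) :
    ent p (fun ω => fun j => Y j ω) = ∑ j, ent p (Y j) := by
  have hE : ∀ (e : Unit) (f : Fin n → β),
      pr p (fun ω => (((fun _ : Ω => ()) ω), fun j => Y j ω)) (e, f)
        = pr p (fun _ : Ω => ()) e * ∏ j, q j (f j) := by
    intro e f
    have h1 : pr p (fun ω => ((), fun j => Y j ω)) ((), f)
        = pr p (fun ω => fun j => Y j ω) f := by
      unfold pr
      refine Finset.sum_congr rfl fun ω _ => ?_
      simp [Prod.ext_iff]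
    have h2 : pr p (fun _ : Ω => ()) e = 1 := by
      unfold pr; simpa using hp.2
    obtain rfl : e = () := rfl
    rw [h1, h2, one_mul, h f]
  have := cent_tuple_prod hp (fun _ : Ω => ()) Y (fun j _ y => q j y) hE
  rw [cent_unit hp] at this
  rw [Finset.sum_congr rfl fun j _ => cent_unit hp (Y j)] at this
  exact this

/-- Per-coordinate conditional law: reduce conditioning from `E` to one coordinate. -/
lemma cent_coord_kernel {A : Type*} [Fintype A] [DecidableEq A]
    (hp : IsPMF p) {n : ℕ} (E : Ω → ε) (Y : Fin n → Ω → β)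
    (g : Fin n → ε → A) (K : β → A → ℝ)
    (h : ∀ e f, pr p (fun ω => (E ω, fun j => Y j ω)) (e, f)
        = pr p E e * ∏ j, K (f j) (g j e)) (j : Fin n) :
    cent p (Y j) E = cent p (Y j) (fun ω => g j (E ω)) := by
  apply cent_kernel hp E (Y j) (g j) (fun a y => K y a / ∑ z, K z a)
  intro e y
  rcases eq_or_ne (pr p E e) 0 with h0 | h0
  · rw [h0, zero_mul, pr_pair_eq_zero hp E (Y j) h0 y]
  · set c : Fin n → ℝ := fun i => ∑ z, K z (g i e) with hc_def
    have hprod1 : ∏ i, c i = 1 := by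
      have h1 : pr p E e = ∑ f, pr p (fun ω => (E ω, fun i => Y i ω)) (e, f) :=
        pr_fst E _ e
      rw [Finset.sum_congr rfl (fun f _ => h e f), ← Finset.mul_sum,
        ← Fintype.prod_sum (f := fun (i : Fin n) (z : β) => K z (g i e))] at h1
      nth_rewrite 1 [← mul_one (pr p E e)] at h1
      exact (mul_left_cancel₀ h0 h1).symm
    have hcj : c j ≠ 0 := by
      intro hz
      rw [Finset.prod_eq_zero (Finset.mem_univ j) hz] at hprod1
      exact zero_ne_one hprod1
    have hmarg : pr p (fun ω => (E ω, Y j ω)) (e, y)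
        = pr p E e * (K y (g j e) * ∏ i ∈ Finset.univ.erase j, c i) := by
      rw [pr_tuple_marg E Y j e y]
      have hterm : ∀ f : Fin n → β,
          (if f j = y then pr p (fun ω => (E ω, fun i => Y i ω)) (e, f) else 0)
          = pr p E e * (if f j = y then ∏ i, K (f i) (g i e) else 0) := by
        intro f
        rw [h e f]
        split <;> simp
      rw [Finset.sum_congr rfl fun f _ => hterm f, ← Finset.mul_sum,
        sum_fix_coord (fun i z => K z (g i e)) j y]
    have herase : ∏ i ∈ Finset.univ.erase j, c i = (c j)⁻¹ := by
      apply mul_left_cancel₀ hcj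
      rw [Finset.mul_prod_erase Finset.univ c (Finset.mem_univ j), hprod1,
        mul_inv_cancel₀ hcj]
    rw [hmarg, herase, div_eq_mul_inv]

end Aux

/-- single-letterization step of the MAC converse:
I(W1,S1^n;Y^n|W2,X2^n,S2^n) − H(S1^n|S2^n)
  ≤ Σ_j [ I(X1j,S1j;Yj|X2j,S2j) − H(S1j|S2j) ]. -/
theorem mac_converse_single_letter
    {Ω 𝒲₁ 𝒲₂ 𝒮₁ 𝒮₂ 𝒳₁ 𝒳₂ 𝒴 : Type*} [Fintype Ω]
    [Fintype 𝒲₁] [DecidableEq 𝒲₁] [Fintype 𝒲₂] [DecidableEq 𝒲₂]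
    [Fintype 𝒮₁] [DecidableEq 𝒮₁] [Fintype 𝒮₂] [DecidableEq 𝒮₂]
    [Fintype 𝒳₁] [DecidableEq 𝒳₁] [Fintype 𝒳₂] [DecidableEq 𝒳₂]
    [Fintype 𝒴] [DecidableEq 𝒴]
    (p : Ω → ℝ) (hp : IsPMF p) (n : ℕ)
    (W1 : Ω → 𝒲₁) (W2 : Ω → 𝒲₂)
    (S1 : Fin n → Ω → 𝒮₁) (S2 : Fin n → Ω → 𝒮₂)
    (X1 : Fin n → Ω → 𝒳₁) (X2 : Fin n → Ω → 𝒳₂) (Y : Fin n → Ω → 𝒴)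
    (hiid : ∃ q : 𝒮₁ × 𝒮₂ → ℝ, ∀ f : Fin n → 𝒮₁ × 𝒮₂,
      pr p (fun ω => fun j => (S1 j ω, S2 j ω)) f = ∏ j, q (f j))
    (henc1 : ∃ f1 : 𝒲₁ → (Fin n → 𝒮₁) → Fin n → 𝒳₁,
      ∀ ω j, X1 j ω = f1 (W1 ω) (fun i => S1 i ω) j)
    (henc2 : ∃ f2 : 𝒲₂ → (Fin n → 𝒮₂) → Fin n → 𝒳₂,
      ∀ ω j, X2 j ω = f2 (W2 ω) (fun i => S2 i ω) j)
    (hmem : ∃ ch : 𝒴 → 𝒳₁ × 𝒮₁ × 𝒳₂ × 𝒮₂ → ℝ,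
      ∀ (w1 : 𝒲₁) (w2 : 𝒲₂) (x1 : Fin n → 𝒳₁) (s1 : Fin n → 𝒮₁)
        (x2 : Fin n → 𝒳₂) (s2 : Fin n → 𝒮₂) (y : Fin n → 𝒴),
        pr p (fun ω => (W1 ω, W2 ω, (fun j => X1 j ω), (fun j => S1 j ω),
            (fun j => X2 j ω), (fun j => S2 j ω), (fun j => Y j ω)))
          (w1, w2, x1, s1, x2, s2, y)
        = pr p (fun ω => (W1 ω, W2 ω, (fun j => X1 j ω), (fun j => S1 j ω),
            (fun j => X2 j ω), (fun j => S2 j ω))) (w1, w2, x1, s1, x2, s2)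
            * ∏ j, ch (y j) (x1 j, s1 j, x2 j, s2 j)) :
    cmi p (fun ω => (W1 ω, fun j => S1 j ω)) (fun ω => fun j => Y j ω)
        (fun ω => (W2 ω, (fun j => X2 j ω), (fun j => S2 j ω)))
      - cent p (fun ω => fun j => S1 j ω) (fun ω => fun j => S2 j ω)
    ≤ ∑ j : Fin n,
        (cmi p (fun ω => (X1 j ω, S1 j ω)) (Y j) (fun ω => (X2 j ω, S2 j ω))
          - cent p (S1 j) (S2 j)) := by

  classical
  obtain ⟨q, hq⟩ := hiid
  obtain ⟨ch, hch⟩ := hmem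
  -- abbreviations (as plain terms, to keep syntactic match with the goal)
  set A := fun ω => (W1 ω, fun j => S1 j ω) with hA_def
  set B := fun ω => fun j => Y j ω with hB_def
  set C := fun ω => (W2 ω, (fun j => X2 j ω), (fun j => S2 j ω)) with hC_def
  set E := fun ω => (W1 ω, W2 ω, (fun j => X1 j ω), (fun j => S1 j ω),
    (fun j => X2 j ω), (fun j => S2 j ω)) with hE_def
  -- the product form of the joint law of (E, Y^n)
  have hEprod : ∀ (e : 𝒲₁ × 𝒲₂ × (Fin n → 𝒳₁) × (Fin n → 𝒮₁) × (Fin n → 𝒳₂) × (Fin n → 𝒮₂))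
      (f : Fin n → 𝒴),
      pr p (fun ω => (E ω, fun j => Y j ω)) (e, f)
        = pr p E e * ∏ j, ch (f j) (e.2.2.1 j, e.2.2.2.1 j, e.2.2.2.2.1 j, e.2.2.2.2.2 j) := by
    rintro ⟨w1, w2, x1, s1, x2, s2⟩ f
    have hφ : Function.Injective
        (fun t : 𝒲₁ × 𝒲₂ × (Fin n → 𝒳₁) × (Fin n → 𝒮₁) × (Fin n → 𝒳₂) × (Fin n → 𝒮₂) × (Fin n → 𝒴) =>
          ((t.1, t.2.1, t.2.2.1, t.2.2.2.1, t.2.2.2.2.1, t.2.2.2.2.2.1), t.2.2.2.2.2.2)) := by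
      rintro ⟨a1, a2, a3, a4, a5, a6, a7⟩ ⟨b1, b2, b3, b4, b5, b6, b7⟩ h
      simp only [Prod.mk.injEq] at h
      obtain ⟨⟨h1, h2, h3, h4, h5, h6⟩, h7⟩ := h
      simp_all
    have h1 := pr_comp_inj (p := p)
      (X := fun ω => (W1 ω, W2 ω, (fun j => X1 j ω), (fun j => S1 j ω),
        (fun j => X2 j ω), (fun j => S2 j ω), (fun j => Y j ω))) hφ
      (w1, w2, x1, s1, x2, s2, f)
    have h2 : pr p (fun ω => (E ω, fun j => Y j ω)) ((w1, w2, x1, s1, x2, s2), f)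
        = pr p (fun ω => (W1 ω, W2 ω, (fun j => X1 j ω), (fun j => S1 j ω),
            (fun j => X2 j ω), (fun j => S2 j ω), (fun j => Y j ω)))
          (w1, w2, x1, s1, x2, s2, f) := h1
    rw [h2, hch w1 w2 x1 s1 x2 s2 f]
  -- memoryless tuple entropy
  have hBE : cent p B E = ∑ j, cent p (Y j) E :=
    cent_tuple_prod hp E Y
      (fun j e y => ch y (e.2.2.1 j, e.2.2.2.1 j, e.2.2.2.2.1 j, e.2.2.2.2.2 j)) hEprod
  -- per-coordinate kernel reduction
  have hYjE : ∀ j, cent p (Y j) E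
      = cent p (Y j) (fun ω => (X1 j ω, S1 j ω, X2 j ω, S2 j ω)) := fun j =>
    cent_coord_kernel hp E Y
      (fun j e => (e.2.2.1 j, e.2.2.2.1 j, e.2.2.2.2.1 j, e.2.2.2.2.2 j)) ch hEprod j
  -- conditioning reductions
  have hAC : cent p B E ≤ cent p B (fun ω => (A ω, C ω)) :=
    cent_le_cent_comp hp B E
      (fun e => ((e.1, e.2.2.2.1), (e.2.1, e.2.2.2.2.1, e.2.2.2.2.2)))
  have hsub : cent p B C ≤ ∑ j, cent p (Y j) C := cent_tuple_le_sum hp n Y C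
  have hproj : ∀ j, cent p (Y j) C ≤ cent p (Y j) (fun ω => (X2 j ω, S2 j ω)) := fun j =>
    cent_le_cent_comp hp (Y j) C (fun c => (c.2.1 j, c.2.2 j))
  -- i.i.d. state entropies
  have hpair : ent p (fun ω => fun j => (S1 j ω, S2 j ω))
      = ∑ j, ent p (fun ω => (S1 j ω, S2 j ω)) :=
    ent_tuple_prod hp (fun j ω => (S1 j ω, S2 j ω)) (fun _ s => q s) hq
  have hS2pr : ∀ gg : Fin n → 𝒮₂,
      pr p (fun ω => fun j => S2 j ω) gg = ∏ j, ∑ s1, q (s1, gg j) := by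
    intro gg
    have h1 : pr p (fun ω => fun j => S2 j ω) gg
        = ∑ f : Fin n → 𝒮₁ × 𝒮₂, if (fun j => (f j).2) = gg
            then pr p (fun ω => fun j => (S1 j ω, S2 j ω)) f else 0 :=
      pr_comp (p := p) (fun ω => fun j => (S1 j ω, S2 j ω))
        (fun f => fun j => (f j).2) gg
    rw [h1]
    have hterm : ∀ f : Fin n → 𝒮₁ × 𝒮₂,
        (if (fun j => (f j).2) = gg
            then pr p (fun ω => fun j => (S1 j ω, S2 j ω)) f else 0)
        = ∏ j, (if (f j).2 = gg j then q (f j) else 0) := by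
      intro f
      by_cases hf : (fun j => (f j).2) = gg
      · rw [if_pos hf, hq f]
        refine Finset.prod_congr rfl fun j _ => ?_
        rw [if_pos (congrFun hf j)]
      · rw [if_neg hf]
        symm
        obtain ⟨j, hj⟩ : ∃ j, (f j).2 ≠ gg j := by
          by_contra hc
          push_neg at hc
          exact hf (funext hc)
        exact Finset.prod_eq_zero (Finset.mem_univ j) (by rw [if_neg hj])
    rw [Finset.sum_congr rfl fun f _ => hterm f,
      ← Fintype.prod_sum (f := fun (j : Fin n) (s : 𝒮₁ × 𝒮₂) =>
        if s.2 = gg j then q s else 0)]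
    refine Finset.prod_congr rfl fun j _ => ?_
    rw [Fintype.sum_prod_type]
    refine Finset.sum_congr rfl fun s1 _ => ?_
    simp
  have hS2 : ent p (fun ω => fun j => S2 j ω) = ∑ j, ent p (S2 j) :=
    ent_tuple_prod hp S2 (fun j z => ∑ s1, q (s1, z)) hS2pr
  have hsplit_pair : ent p (fun ω => ((fun j => S1 j ω), (fun j => S2 j ω)))
      = ent p (fun ω => fun j => (S1 j ω, S2 j ω)) := by
    have h := ent_comp_inj (p := p)
      (φ := fun f : Fin n → 𝒮₁ × 𝒮₂ => ((fun j => (f j).1), (fun j => (f j).2)))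
      (fun ω => fun j => (S1 j ω, S2 j ω)) (fun f f' h => by
        obtain ⟨h1, h2⟩ := Prod.ext_iff.mp h
        funext j
        exact Prod.ext (congrFun h1 j) (congrFun h2 j))
    simpa using h
  have hcentS : cent p (fun ω => fun j => S1 j ω) (fun ω => fun j => S2 j ω)
      = ∑ j, cent p (S1 j) (S2 j) := by
    unfold cent
    rw [hsplit_pair, hpair, hS2, ← Finset.sum_sub_distrib]
  -- the two cmi identities
  have hcmi : cmi p A B C = cent p B C - cent p B (fun ω => (A ω, C ω)) :=
    cmi_eq_cent_sub A B C
  have hcmi_j : ∀ j, cmi p (fun ω => (X1 j ω, S1 j ω)) (Y j) (fun ω => (X2 j ω, S2 j ω))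
      = cent p (Y j) (fun ω => (X2 j ω, S2 j ω))
        - cent p (Y j) (fun ω => ((X1 j ω, S1 j ω), (X2 j ω, S2 j ω))) := fun j =>
    cmi_eq_cent_sub _ _ _
  have hreassoc : ∀ j, cent p (Y j) (fun ω => (X1 j ω, S1 j ω, X2 j ω, S2 j ω))
      = cent p (Y j) (fun ω => ((X1 j ω, S1 j ω), (X2 j ω, S2 j ω))) := fun j =>
    cent_comp_right_inj (Y j) (fun ω => ((X1 j ω, S1 j ω), (X2 j ω, S2 j ω)))
      (φ := fun s : (𝒳₁ × 𝒮₁) × 𝒳₂ × 𝒮₂ => (s.1.1, s.1.2, s.2))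
      (fun s t h => by
        obtain ⟨h1, h2, h3⟩ : s.1.1 = t.1.1 ∧ s.1.2 = t.1.2 ∧ s.2 = t.2 := by
          simpa [Prod.ext_iff] using h
        exact Prod.ext (Prod.ext h1 h2) h3)
  -- assemble
  have hRHS : ∑ j : Fin n,
        (cmi p (fun ω => (X1 j ω, S1 j ω)) (Y j) (fun ω => (X2 j ω, S2 j ω))
          - cent p (S1 j) (S2 j))
      = (∑ j, cent p (Y j) (fun ω => (X2 j ω, S2 j ω)))
        - (∑ j, cent p (Y j) (fun ω => (X1 j ω, S1 j ω, X2 j ω, S2 j ω)))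
        - ∑ j, cent p (S1 j) (S2 j) := by
    rw [Finset.sum_congr rfl fun j _ => by rw [hcmi_j j, ← hreassoc j]]
    rw [← Finset.sum_sub_distrib, ← Finset.sum_sub_distrib]
  have hsum1 : ∑ j, cent p (Y j) C ≤ ∑ j, cent p (Y j) (fun ω => (X2 j ω, S2 j ω)) :=
    Finset.sum_le_sum fun j _ => hproj j
  have hsum2 : ∑ j, cent p (Y j) E
      = ∑ j, cent p (Y j) (fun ω => (X1 j ω, S1 j ω, X2 j ω, S2 j ω)) :=
    Finset.sum_congr rfl fun j _ => hYjE j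
  rw [hcentS, hRHS]
  have hABC : cmi p A B C = cmi p (fun ω => (W1 ω, fun j => S1 j ω))
      (fun ω => fun j => Y j ω) (fun ω => (W2 ω, (fun j => X2 j ω), (fun j => S2 j ω))) := rfl
  linarith [hcmi, hsub, hsum1, hAC, hBE, hsum2]
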